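/- arXiv:1603.01751 — 3 statements merged into one kernel-verified Lean document; each statement's English description precedes it below -/
import Mathlib

section
/- Let L : Sym(n,ℝ) → Sym(n,ℝ) be a linear map that maps positive semidefinite matrices to positive semidefinite matrices. If there exists a positive definite matrix P with L(P) - P negative definite, then for every positive semidefinite Q_0 the sequence Q_{k+1} = L(Q_k) converges to 0. -/
open Matrix Filter

private lemma psd_add' {n : ℕ} {A B : Matrix (Fin n) (Fin n) ℝ} (hA : A.PosSemidef)
    (hB : B.PosSemidef) : (A + B).PosSemidef := by
  refine Matrix.PosSemidef.of_dotProduct_mulVec_nonneg (by rw [Matrix.IsHermitian, conjTranspose_add, hA.1, hB.1]) fun x => ?_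
  have := add_nonneg (hA.dotProduct_mulVec_nonneg x) (hB.dotProduct_mulVec_nonneg x)
  simpa [add_mulVec, dotProduct_add] using this

private lemma psd_smul' {n : ℕ} {A : Matrix (Fin n) (Fin n) ℝ} (hA : A.PosSemidef) {c : ℝ}
    (hc : 0 ≤ c) : (c • A).PosSemidef := by
  refine Matrix.PosSemidef.of_dotProduct_mulVec_nonneg (by rw [Matrix.IsHermitian, conjTranspose_smul, hA.1]; simp) fun x => ?_
  have := mul_nonneg hc (hA.dotProduct_mulVec_nonneg x)
  simpa [smul_mulVec, dotProduct_smul, smul_eq_mul] using this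

private lemma psd_diag_nonneg {n : ℕ} {X : Matrix (Fin n) (Fin n) ℝ} (hX : X.PosSemidef)
    (i : Fin n) : 0 ≤ X i i := by
  have := hX.dotProduct_mulVec_nonneg (Pi.single i (1:ℝ))
  simpa [mulVec_single] using this

private lemma psd_entry_bound {n : ℕ} {X : Matrix (Fin n) (Fin n) ℝ} (hX : X.PosSemidef)
    (i j : Fin n) : |X i j| ≤ X i i + X j j := by
  have h1 := hX.dotProduct_mulVec_nonneg (Pi.single i (1:ℝ) + Pi.single j 1)
  have h2 := hX.dotProduct_mulVec_nonneg (Pi.single i (1:ℝ) - Pi.single j 1)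
  have hs : X j i = X i j := by
    have h := congrFun (congrFun hX.1 i) j
    simpa [conjTranspose_apply] using h
  simp [mulVec_add, mulVec_sub, dotProduct_add, dotProduct_sub, add_dotProduct, sub_dotProduct,
    mulVec_single, single_dotProduct, dotProduct_single, hs] at h1 h2
  rw [abs_le]
  constructor <;> nlinarith

private lemma quad_cont' {n : ℕ} (C : Matrix (Fin n) (Fin n) ℝ) :
    Continuous (fun x : Fin n → ℝ => x ⬝ᵥ C *ᵥ x) := by
  simp only [dotProduct, mulVec]
  fun_prop

private lemma quad_smul' {n : ℕ} (C : Matrix (Fin n) (Fin n) ℝ) (t : ℝ) (x : Fin n → ℝ) :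
    (t • x) ⬝ᵥ C *ᵥ (t • x) = t^2 * (x ⬝ᵥ C *ᵥ x) := by
  rw [mulVec_smul, dotProduct_smul, smul_dotProduct]
  ring_nf

private lemma eps_lemma' {n : ℕ} (hn : 0 < n) (A B : Matrix (Fin n) (Fin n) ℝ) (hA : A.PosDef)
    (hB : B.IsHermitian) : ∃ ε > (0:ℝ), (A - ε • B).PosSemidef := by
  haveI : Nonempty (Fin n) := ⟨⟨0, hn⟩⟩
  have hsc : IsCompact (Metric.sphere (0 : Fin n → ℝ) 1) := isCompact_sphere _ _
  have hsne : (Metric.sphere (0 : Fin n → ℝ) 1).Nonempty :=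
    NormedSpace.sphere_nonempty.mpr zero_le_one
  obtain ⟨u, huS, hu⟩ := hsc.exists_isMinOn hsne (quad_cont' A).continuousOn
  obtain ⟨v, hvS, hv⟩ := hsc.exists_isMaxOn hsne (quad_cont' B).continuousOn
  set m := u ⬝ᵥ A *ᵥ u with hm
  set M := v ⬝ᵥ B *ᵥ v with hM
  have hm0 : 0 < m := by
    have hu0 : u ≠ 0 := by
      intro h
      rw [h] at huS
      simp at huS
    rw [hm]
    simpa using hA.dotProduct_mulVec_pos hu0
  set ε := m / max M 1 with hε
  have hmax : (0:ℝ) < max M 1 := lt_max_of_lt_right one_pos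
  have hε0 : 0 < ε := div_pos hm0 hmax
  refine ⟨ε, hε0, Matrix.PosSemidef.of_dotProduct_mulVec_nonneg (by
      have : (A - ε • B)ᴴ = Aᴴ - ε • Bᴴ := by
        simp [conjTranspose_sub, conjTranspose_smul]
      rw [Matrix.IsHermitian, this, hA.1, hB])
    ?_⟩
  intro x
  have key : ∀ y ∈ Metric.sphere (0 : Fin n → ℝ) 1, 0 ≤ y ⬝ᵥ A *ᵥ y - ε * (y ⬝ᵥ B *ᵥ y) := by
    intro y hy
    have h1 : m ≤ y ⬝ᵥ A *ᵥ y := hu hy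
    have h2 : y ⬝ᵥ B *ᵥ y ≤ M := hv hy
    have hεM : ε * M ≤ m := by
      rw [hε, div_mul_eq_mul_div, div_le_iff₀ hmax]
      nlinarith [le_max_left M 1, le_max_right M 1]
    nlinarith
  have expand : (star x) ⬝ᵥ (A - ε • B) *ᵥ x = x ⬝ᵥ A *ᵥ x - ε * (x ⬝ᵥ B *ᵥ x) := by
    simp [sub_mulVec, dotProduct_sub, smul_mulVec, dotProduct_smul, smul_eq_mul]
  rw [expand]
  rcases eq_or_ne x 0 with rfl | hx
  · simp
  · have hnx : (0:ℝ) < ‖x‖ := norm_pos_iff.mpr hx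
    have hyS : ‖x‖⁻¹ • x ∈ Metric.sphere (0 : Fin n → ℝ) 1 := by
      simp [norm_smul, abs_of_pos (inv_pos.mpr hnx), inv_mul_cancel₀ hnx.ne']
    have := key _ hyS
    rw [quad_smul', quad_smul'] at this
    have hc : 0 < ‖x‖⁻¹ ^ 2 := by positivity
    have h2 : 0 ≤ ‖x‖⁻¹ ^ 2 * (x ⬝ᵥ A *ᵥ x - ε * (x ⬝ᵥ B *ᵥ x)) := by linarith [this]
    nlinarith [h2, hc]

/-- Theorem 1, (iii) ⇒ stability of the monotone linear recursion: a quadratic Lyapunov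
certificate `P` for the positivity-preserving linear map `L` implies `L^[k] Q₀ → 0` for
every positive semidefinite initial condition `Q₀`. -/
theorem stmt4 (n : ℕ)
    (L : Module.End ℝ (Matrix (Fin n) (Fin n) ℝ))
    (hL : ∀ X : Matrix (Fin n) (Fin n) ℝ, X.PosSemidef → (L X).PosSemidef)
    (P : Matrix (Fin n) (Fin n) ℝ) (hP : P.PosDef)
    (hLyap : (P - L P).PosDef) :
    ∀ Q0 : Matrix (Fin n) (Fin n) ℝ, Q0.PosSemidef →
      Tendsto (fun k : ℕ => (L ^ k) Q0) atTop (nhds 0) := by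
  intro Q0 hQ0
  rcases Nat.eq_zero_or_pos n with rfl | hn
  · have hz : ∀ k, (L ^ k) Q0 = 0 := fun k => Subsingleton.elim _ _
    simpa [hz] using (tendsto_const_nhds :
      Tendsto (fun _ : ℕ => (0 : Matrix (Fin 0) (Fin 0) ℝ)) atTop (nhds 0))
  obtain ⟨ε, hε0, hεP⟩ := eps_lemma' hn (P - L P) P hLyap hP.1
  obtain ⟨δ, hδ0, hδQ⟩ := eps_lemma' hn P Q0 hP hQ0.1
  set lam := max (1 - ε) (1/2 : ℝ) with hlam
  have hlam0 : 0 < lam := lt_of_lt_of_le one_half_pos (le_max_right _ _)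
  have hlam1 : lam < 1 := max_lt (by linarith) (by norm_num)
  have hLP : (lam • P - L P).PosSemidef := by
    have heq : lam • P - L P = ((P - L P) - ε • P) + (lam - (1 - ε)) • P := by
      module
    rw [heq]
    exact psd_add' hεP (psd_smul' hP.posSemidef (by simp [hlam, sub_le_iff_le_add]))
  set c := δ⁻¹ with hc
  have hc0 : 0 < c := inv_pos.mpr hδ0
  have key : ∀ k : ℕ, ((L ^ k) Q0).PosSemidef ∧
      ((c * lam ^ k) • P - (L ^ k) Q0).PosSemidef := by
    intro k
    induction k with
    | zero =>
      refine ⟨by simpa using hQ0, ?_⟩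
      have heq : (c * lam ^ 0) • P - (L ^ 0) Q0 = c • (P - δ • Q0) := by
        simp only [pow_zero, mul_one, Module.End.one_apply, smul_sub, smul_smul, hc,
          inv_mul_cancel₀ hδ0.ne']
        simp
      rw [heq]
      exact psd_smul' hδQ hc0.le
    | succ k ih =>
      obtain ⟨ih1, ih2⟩ := ih
      have hstep : (L ^ (k + 1)) Q0 = L ((L ^ k) Q0) := by
        rw [pow_succ', Module.End.mul_apply]
      constructor
      · rw [hstep]; exact hL _ ih1
      · have h3 : ((c * lam ^ k) • L P - L ((L ^ k) Q0)).PosSemidef := by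
          have := hL _ ih2
          rwa [map_sub, LinearMap.map_smul] at this
        have heq : (c * lam ^ (k + 1)) • P - (L ^ (k + 1)) Q0 =
            (c * lam ^ k) • (lam • P - L P) + ((c * lam ^ k) • L P - L ((L ^ k) Q0)) := by
          rw [hstep, pow_succ]
          module
        rw [heq]
        exact psd_add' (psd_smul' hLP (by positivity)) h3
  refine tendsto_pi_nhds.mpr ?_
  intro i
  rw [tendsto_pi_nhds]
  intro j
  have hlim : Tendsto (fun k : ℕ => (c * (P i i + P j j)) * lam ^ k) atTop (nhds 0) := by
    have := (tendsto_pow_atTop_nhds_zero_of_lt_one hlam0.le hlam1).const_mul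
      (c * (P i i + P j j))
    simpa using this
  have h0 : ((0 : Matrix (Fin n) (Fin n) ℝ) i j) = 0 := rfl
  rw [h0]
  apply squeeze_zero_norm _ hlim
  intro k
  obtain ⟨h1, h2⟩ := key k
  have hb : |(L ^ k) Q0 i j| ≤ (L ^ k) Q0 i i + (L ^ k) Q0 j j := psd_entry_bound h1 i j
  have hdi : (L ^ k) Q0 i i ≤ (c * lam ^ k) * P i i := by
    have := psd_diag_nonneg h2 i
    simp only [Matrix.sub_apply, Matrix.smul_apply, smul_eq_mul] at this
    linarith
  have hdj : (L ^ k) Q0 j j ≤ (c * lam ^ k) * P j j := by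
    have := psd_diag_nonneg h2 j
    simp only [Matrix.sub_apply, Matrix.smul_apply, smul_eq_mul] at this
    linarith
  have : ‖(L ^ k) Q0 i j‖ = |(L ^ k) Q0 i j| := rfl
  rw [this]
  calc |(L ^ k) Q0 i j| ≤ (L ^ k) Q0 i i + (L ^ k) Q0 j j := hb
    _ ≤ (c * lam ^ k) * P i i + (c * lam ^ k) * P j j := add_le_add hdi hdj
    _ = (c * (P i i + P j j)) * lam ^ k := by ring
end

section
/- Let A, E ∈ ℝ^{n×n} and let S : [0, T̄] → Sym(n,ℝ) be continuously differentiable and satisfy the differential linear matrix inequality -S'(τ) + AᵀS(τ) + S(τ)A + EᵀS(τ)E ≼ 0 for all τ ∈ [0, T̄]. Let Q : [0, T̄] → Sym(n,ℝ) solve Q'(τ) = AᵀQ(τ) + Q(τ)A + EᵀQ(τ)E with Q(0) = S(0). Then S(τ) ≽ Q(τ) for all τ ∈ [0, T̄]. -/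
open Matrix Set Filter Topology

lemma quadform_eq {n : ℕ} (M : Matrix (Fin n) (Fin n) ℝ) (x : Fin n → ℝ) :
    x ⬝ᵥ M *ᵥ x = ∑ i, ∑ j, x i * (M i j * x j) := by
  simp [dotProduct, mulVec, Finset.mul_sum]

lemma quad_bound {n : ℕ} (M : Matrix (Fin n) (Fin n) ℝ) :
    ∃ a : ℝ, 0 ≤ a ∧ ∀ x : Fin n → ℝ, |x ⬝ᵥ M *ᵥ x| ≤ a * (x ⬝ᵥ x) := by
  refine ⟨∑ i, ∑ j, |M i j|, by positivity, fun x => ?_⟩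
  have hsq : ∀ i : Fin n, (x i)^2 ≤ x ⬝ᵥ x := fun i => by
    simpa [dotProduct, sq] using Finset.single_le_sum (f := fun k => x k * x k)
      (fun k _ => mul_self_nonneg (x k)) (Finset.mem_univ i)
  have key : ∀ i j : Fin n, |x i * (M i j * x j)| ≤ |M i j| * (x ⬝ᵥ x) := by
    intro i j
    have h1 := hsq i; have h2 := hsq j
    have hxx : |x i * x j| ≤ x ⬝ᵥ x := by
      rcases abs_cases (x i * x j) with ⟨h, _⟩ | ⟨h, _⟩
      · rw [h]; nlinarith [sq_nonneg (x i - x j)]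
      · rw [h]; nlinarith [sq_nonneg (x i + x j)]
    calc |x i * (M i j * x j)| = |M i j| * |x i * x j| := by
          simp [abs_mul]; ring
      _ ≤ |M i j| * (x ⬝ᵥ x) := mul_le_mul_of_nonneg_left hxx (abs_nonneg _)
  calc |x ⬝ᵥ M *ᵥ x| = |∑ i, ∑ j, x i * (M i j * x j)| := by rw [quadform_eq]
    _ ≤ ∑ i, ∑ j, |x i * (M i j * x j)| :=
        (Finset.abs_sum_le_sum_abs _ _).trans
          (Finset.sum_le_sum fun i _ => Finset.abs_sum_le_sum_abs _ _)
    _ ≤ ∑ i, ∑ j, |M i j| * (x ⬝ᵥ x) :=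
        Finset.sum_le_sum fun i _ => Finset.sum_le_sum fun j _ => key i j
    _ = (∑ i, ∑ j, |M i j|) * (x ⬝ᵥ x) := by simp [Finset.sum_mul]

lemma dot_swap {n : ℕ} (M : Matrix (Fin n) (Fin n) ℝ) (x y : Fin n → ℝ) :
    x ⬝ᵥ Mᵀ *ᵥ y = (M *ᵥ x) ⬝ᵥ y := by
  rw [dotProduct_mulVec, vecMul_transpose]

lemma dot_symm_swap {n : ℕ} {M : Matrix (Fin n) (Fin n) ℝ} (hM : M.IsSymm)
    (x y : Fin n → ℝ) : x ⬝ᵥ M *ᵥ y = (M *ᵥ x) ⬝ᵥ y := by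
  conv_lhs => rw [← hM]
  exact dot_swap M x y

lemma psd_mulVec_zero {n : ℕ} {M : Matrix (Fin n) (Fin n) ℝ} (hM : M.IsSymm)
    (hpsd : ∀ y : Fin n → ℝ, 0 ≤ y ⬝ᵥ M *ᵥ y) {x : Fin n → ℝ}
    (hx : x ⬝ᵥ M *ᵥ x = 0) : M *ᵥ x = 0 := by
  have key : ∀ y : Fin n → ℝ, y ⬝ᵥ M *ᵥ x = 0 := by
    intro y
    set c := y ⬝ᵥ M *ᵥ y with hc
    set d := y ⬝ᵥ M *ᵥ x with hd
    have hc0 : 0 ≤ c := hpsd y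
    have hexp : ∀ t : ℝ, 0 ≤ t^2 * c + 2 * t * d := by
      intro t
      have := hpsd (x + t • y)
      have hxy : x ⬝ᵥ M *ᵥ y = d := by
        rw [hd, dot_symm_swap hM y x, dotProduct_comm]
      calc (0:ℝ) ≤ (x + t • y) ⬝ᵥ M *ᵥ (x + t • y) := this
        _ = t^2 * c + 2 * t * d := by
            rw [mulVec_add, mulVec_smul, add_dotProduct, smul_dotProduct,
              dotProduct_add, dotProduct_add, dotProduct_smul, dotProduct_smul, hx, hxy]
            rw [hc, hd]
            ring_nf
    have hd0 : d = 0 := by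
      by_contra hne
      have hc1 : (0:ℝ) < c + 1 := by linarith
      have h := hexp (-d / (c + 1))
      have hc1 : (0:ℝ) < c + 1 := by linarith
      field_simp at h
      have hd2 : 0 < d ^ 2 := by positivity
      nlinarith [mul_pos hd2 hc1, mul_pos (mul_pos hd2 hc1) hc1]
    exact hd0.symm ▸ rfl
  funext i
  have := key (Pi.single i 1)
  simpa [dotProduct, Pi.single_apply] using this

lemma deriv_nonpos_of_left_min {g : ℝ → ℝ} {d τ₀ : ℝ} (hder : HasDerivAt g d τ₀)
    (h0 : 0 < τ₀) (hmin : ∀ τ ∈ Ioo 0 τ₀, g τ₀ ≤ g τ) : d ≤ 0 := by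
  have hslope := hasDerivAt_iff_tendsto_slope.1 hder
  have hle : Tendsto (slope g τ₀) (𝓝[<] τ₀) (𝓝 d) :=
    hslope.mono_left (nhdsWithin_mono _ fun x hx => ne_of_lt hx)
  have hev : ∀ᶠ τ in 𝓝[<] τ₀, slope g τ₀ τ ≤ 0 := by
    filter_upwards [Ioo_mem_nhdsLT_of_mem (show τ₀ ∈ Ioc 0 τ₀ from ⟨h0, le_rfl⟩)] with τ hτ
    have h1 : g τ₀ ≤ g τ := hmin τ hτ
    have h2 : τ - τ₀ < 0 := by linarith [hτ.2]
    rw [slope_def_field]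
    exact div_nonpos_iff.2 (Or.inl ⟨by linarith, by linarith⟩)
  exact le_of_tendsto hle hev

lemma psd_of_unit_pos {n : ℕ} {M : Matrix (Fin n) (Fin n) ℝ}
    (h : ∀ x : Fin n → ℝ, x ⬝ᵥ x = 1 → 0 < x ⬝ᵥ M *ᵥ x) :
    ∀ x : Fin n → ℝ, 0 ≤ x ⬝ᵥ M *ᵥ x := by
  intro x
  rcases eq_or_ne x 0 with rfl | hx
  · simp
  · have hxx : 0 < x ⬝ᵥ x := by
      have hnn : 0 ≤ x ⬝ᵥ x := Finset.sum_nonneg fun i _ => mul_self_nonneg (x i)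
      rcases lt_or_eq_of_le hnn with h' | h'
      · exact h'
      · exact absurd (dotProduct_self_eq_zero.1 h'.symm) hx
    set s := Real.sqrt (x ⬝ᵥ x) with hs
    have hs0 : 0 < s := Real.sqrt_pos.2 hxx
    have hz := h ((1/s) • x) (by
      rw [smul_dotProduct, dotProduct_smul, smul_eq_mul, smul_eq_mul]
      rw [← Real.mul_self_sqrt hxx.le, ← hs]
      field_simp)
    rw [smul_dotProduct, mulVec_smul, dotProduct_smul, smul_eq_mul, smul_eq_mul] at hz
    have hu : 0 < 1/s := by positivity
    nlinarith [hz, mul_pos hu hu]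

noncomputable def lyapL {n : ℕ} (A E : Matrix (Fin n) (Fin n) ℝ) :
    (Fin n → Fin n → ℝ) →ₗ[ℝ] (Fin n → Fin n → ℝ) where
  toFun X := (Aᵀ * Matrix.of X + Matrix.of X * A + Eᵀ * Matrix.of X * E : Matrix (Fin n) (Fin n) ℝ)
  map_add' X Y := by
    have h : Matrix.of (X + Y) = Matrix.of X + Matrix.of Y := rfl
    show (Aᵀ * Matrix.of (X + Y) + Matrix.of (X + Y) * A + Eᵀ * Matrix.of (X + Y) * E : Matrix (Fin n) (Fin n) ℝ)
      = (Aᵀ * Matrix.of X + Matrix.of X * A + Eᵀ * Matrix.of X * E : Matrix (Fin n) (Fin n) ℝ)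
        + (Aᵀ * Matrix.of Y + Matrix.of Y * A + Eᵀ * Matrix.of Y * E : Matrix (Fin n) (Fin n) ℝ)
    rw [h, Matrix.mul_add, Matrix.add_mul, Matrix.mul_add Eᵀ, Matrix.add_mul]
    abel
  map_smul' r X := by
    have h : Matrix.of (r • X) = r • Matrix.of X := rfl
    show (Aᵀ * Matrix.of (r • X) + Matrix.of (r • X) * A + Eᵀ * Matrix.of (r • X) * E : Matrix (Fin n) (Fin n) ℝ)
      = r • (Aᵀ * Matrix.of X + Matrix.of X * A + Eᵀ * Matrix.of X * E : Matrix (Fin n) (Fin n) ℝ)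
    rw [h, Matrix.mul_smul, Matrix.smul_mul, Matrix.mul_smul, Matrix.smul_mul, smul_add, smul_add]

lemma lyap_transpose {n : ℕ} (A E X : Matrix (Fin n) (Fin n) ℝ) :
    (Aᵀ * X + X * A + Eᵀ * X * E)ᵀ = Aᵀ * Xᵀ + Xᵀ * A + Eᵀ * Xᵀ * E := by
  simp only [Matrix.transpose_add, Matrix.transpose_mul, Matrix.transpose_transpose]
  rw [Matrix.mul_assoc]
  abel

lemma Q_symm {n : ℕ} (A E : Matrix (Fin n) (Fin n) ℝ) (T : ℝ) (hT : 0 < T)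
    (Q : ℝ → Matrix (Fin n) (Fin n) ℝ)
    (hQder : ∀ τ ∈ Icc (0 : ℝ) T, ∀ i j,
      HasDerivAt (fun s => Q s i j) ((Aᵀ * Q τ + Q τ * A + Eᵀ * Q τ * E) i j) τ)
    (hQ0 : (Q 0)ᵀ = Q 0) :
    ∀ τ ∈ Icc (0 : ℝ) T, (Q τ)ᵀ = Q τ := by
  set CL := LinearMap.toContinuousLinearMap (lyapL A E) with hCL
  set f : ℝ → (Fin n → Fin n → ℝ) := fun t i j => Q t i j with hf
  set g : ℝ → (Fin n → Fin n → ℝ) := fun t i j => Q t j i with hg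
  have hf' : ∀ t ∈ Icc (0:ℝ) T, HasDerivAt f (CL (f t)) t := by
    intro t ht
    rw [hasDerivAt_pi]
    intro i
    rw [hasDerivAt_pi]
    intro j
    exact hQder t ht i j
  have hg' : ∀ t ∈ Icc (0:ℝ) T, HasDerivAt g (CL (g t)) t := by
    intro t ht
    rw [hasDerivAt_pi]
    intro i
    rw [hasDerivAt_pi]
    intro j
    have h1 := hQder t ht j i
    have h2 : CL (g t) i j = (Aᵀ * Q t + Q t * A + Eᵀ * Q t * E) j i := by
      have hofg : Matrix.of (g t) = (Q t)ᵀ := rfl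
      show (Aᵀ * Matrix.of (g t) + Matrix.of (g t) * A + Eᵀ * Matrix.of (g t) * E) i j = _
      rw [hofg, ← lyap_transpose]
      rfl
    rw [h2]
    exact h1
  have huniq : EqOn f g (Icc 0 T) := by
    apply ODE_solution_unique_of_mem_Icc_right
      (v := fun _ X => CL X) (s := fun _ => (univ : Set (Fin n → Fin n → ℝ))) (K := ‖CL‖₊)
    · intro t _
      exact CL.lipschitz.lipschitzOnWith
    · intro t ht
      exact ((hf' t ht).continuousAt).continuousWithinAt
    · intro t ht
      exact (hf' t (Ico_subset_Icc_self ht)).hasDerivWithinAt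
    · intro t ht; trivial
    · intro t ht
      exact ((hg' t ht).continuousAt).continuousWithinAt
    · intro t ht
      exact (hg' t (Ico_subset_Icc_self ht)).hasDerivWithinAt
    · intro t ht; trivial
    · funext i j
      show Q 0 i j = Q 0 j i
      conv_lhs => rw [← hQ0]
      rfl
  intro τ hτ
  have := huniq hτ
  ext i j
  show Q τ j i = Q τ i j
  have h1 : f τ i j = g τ i j := by rw [this]
  exact h1.symm

/-- Matrix comparison lemma (Theorem 1, (iv) ⇒ (iii)): a solution of the differential LMI
dominates the exact solution of the Lyapunov matrix ODE in the Loewner order. -/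
theorem stmt5 (n : ℕ) (A E : Matrix (Fin n) (Fin n) ℝ) (T : ℝ) (hT : 0 < T)
    (S dS Q : ℝ → Matrix (Fin n) (Fin n) ℝ)
    (hSsym : ∀ τ ∈ Icc (0 : ℝ) T, (S τ).IsSymm)
    (hSder : ∀ τ ∈ Icc (0 : ℝ) T, ∀ i j, HasDerivAt (fun s => S s i j) (dS τ i j) τ)
    (hDLMI : ∀ τ ∈ Icc (0 : ℝ) T,
      (dS τ - (Aᵀ * S τ + S τ * A + Eᵀ * S τ * E)).PosSemidef)
    (hQder : ∀ τ ∈ Icc (0 : ℝ) T, ∀ i j,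
      HasDerivAt (fun s => Q s i j) ((Aᵀ * Q τ + Q τ * A + Eᵀ * Q τ * E) i j) τ)
    (hQ0 : Q 0 = S 0) :
    ∀ τ ∈ Icc (0 : ℝ) T, (S τ - Q τ).PosSemidef := by
  -- Q is symmetric
  have hQsym : ∀ τ ∈ Icc (0 : ℝ) T, (Q τ)ᵀ = Q τ :=
    Q_symm A E T hT Q hQder (by rw [hQ0]; exact hSsym 0 ⟨le_rfl, hT.le⟩)
  set D : ℝ → Matrix (Fin n) (Fin n) ℝ := fun τ => S τ - Q τ with hD
  set dD : ℝ → Matrix (Fin n) (Fin n) ℝ :=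
    fun τ => dS τ - (Aᵀ * Q τ + Q τ * A + Eᵀ * Q τ * E) with hdD
  have hDder : ∀ τ ∈ Icc (0 : ℝ) T, ∀ i j, HasDerivAt (fun s => D s i j) (dD τ i j) τ := by
    intro τ hτ i j
    have := (hSder τ hτ i j).sub (hQder τ hτ i j)
    simpa [hD, hdD, Matrix.sub_apply, Pi.sub_def] using this
  have hDsym : ∀ τ ∈ Icc (0 : ℝ) T, (D τ).IsSymm := by
    intro τ hτ
    show (S τ - Q τ)ᵀ = S τ - Q τ
    rw [Matrix.transpose_sub, hQsym τ hτ, hSsym τ hτ]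
  have hD0 : D 0 = 0 := by rw [hD]; simp [hQ0]
  -- the differential inequality for D
  have LMIkey : ∀ τ ∈ Icc (0 : ℝ) T, ∀ x : Fin n → ℝ,
      x ⬝ᵥ (Aᵀ * D τ + D τ * A + Eᵀ * D τ * E) *ᵥ x ≤ x ⬝ᵥ dD τ *ᵥ x := by
    intro τ hτ x
    have h := (hDLMI τ hτ).dotProduct_mulVec_nonneg x
    rw [star_trivial] at h
    have hmat : dD τ - (Aᵀ * D τ + D τ * A + Eᵀ * D τ * E)
        = dS τ - (Aᵀ * S τ + S τ * A + Eᵀ * S τ * E) := by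
      simp only [hD, hdD, Matrix.mul_sub, Matrix.sub_mul]
      abel
    rw [← hmat, sub_mulVec, dotProduct_sub] at h
    linarith
  obtain ⟨a, ha0, hAq⟩ := quad_bound A
  obtain ⟨b, hb0, hBq⟩ := quad_bound (Eᵀ * E)
  set c : ℝ := 2 * a + b + 1 with hc
  set Pm : ℝ → ℝ → Matrix (Fin n) (Fin n) ℝ :=
    fun ε τ => D τ + (ε * Real.exp (c * τ)) • 1 with hPm
  have quadPm : ∀ ε τ (y : Fin n → ℝ),
      y ⬝ᵥ Pm ε τ *ᵥ y = y ⬝ᵥ D τ *ᵥ y + ε * Real.exp (c * τ) * (y ⬝ᵥ y) := by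
    intro ε τ y
    rw [hPm]
    simp only [add_mulVec, smul_mulVec, one_mulVec, dotProduct_add, dotProduct_smul,
      smul_eq_mul]
  -- continuity of entries of D on Icc
  have hDcont : ∀ i j, ContinuousOn (fun τ => D τ i j) (Icc (0:ℝ) T) := by
    intro i j τ hτ
    exact (hDder τ hτ i j).continuousAt.continuousWithinAt
  -- main claim
  have claim : ∀ ε : ℝ, 0 < ε → ∀ τ ∈ Icc (0:ℝ) T, ∀ x : Fin n → ℝ,
      x ⬝ᵥ x = 1 → 0 < x ⬝ᵥ Pm ε τ *ᵥ x := by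
    intro ε hε
    by_contra hcon
    push_neg at hcon
    obtain ⟨τ₁, hτ₁, x₁, hx₁, hx₁le⟩ := hcon
    -- the compact "bad set"
    set sph : Set (Fin n → ℝ) := {x | x ⬝ᵥ x = 1} with hsph
    have hdotc : Continuous (fun y : Fin n → ℝ => y ⬝ᵥ y) := by
      unfold dotProduct
      exact continuous_finset_sum _ fun i _ => (continuous_apply i).mul (continuous_apply i)
    have hsphc : IsCompact sph := by
      have hcl : IsClosed sph := isClosed_eq hdotc continuous_const
      have hbd : Bornology.IsBounded sph := by
        apply Bornology.IsBounded.subset (Metric.isBounded_closedBall (x := (0 : Fin n → ℝ)) (r := 1))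
        intro y hy
        rw [Metric.mem_closedBall, dist_zero_right]
        rw [hsph, mem_setOf_eq] at hy
        apply pi_norm_le_iff_of_nonneg zero_le_one |>.2
        intro i
        rw [Real.norm_eq_abs]
        rw [abs_le_one_iff_mul_self_le_one]
        calc y i * y i ≤ ∑ k, y k * y k :=
              Finset.single_le_sum (f := fun k => y k * y k)
                (fun k _ => mul_self_nonneg (y k)) (Finset.mem_univ i)
          _ = 1 := hy
      exact Metric.isCompact_of_isClosed_isBounded hcl hbd
    set K0 : Set (ℝ × (Fin n → ℝ)) := (Icc (0:ℝ) T) ×ˢ sph with hK0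
    have hK0c : IsCompact K0 := isCompact_Icc.prod hsphc
    set F : ℝ × (Fin n → ℝ) → ℝ := fun p => p.2 ⬝ᵥ Pm ε p.1 *ᵥ p.2 with hF
    have hPmc : ∀ i j, ContinuousOn (fun τ => Pm ε τ i j) (Icc (0:ℝ) T) := by
      intro i j
      have hcc : ContinuousOn (fun τ => D τ i j
          + (ε * Real.exp (c * τ)) * (1 : Matrix (Fin n) (Fin n) ℝ) i j) (Icc (0:ℝ) T) :=
        (hDcont i j).add (Continuous.continuousOn (by fun_prop))
      apply hcc.congr
      intro τ _
      rw [hPm]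
      simp [Matrix.add_apply, Matrix.smul_apply, smul_eq_mul]
    have hFc : ContinuousOn F K0 := by
      have hsumc : ContinuousOn
          (fun p : ℝ × (Fin n → ℝ) => ∑ i, ∑ j, p.2 i * (Pm ε p.1 i j * p.2 j)) K0 := by
        apply continuousOn_finset_sum
        intro i _
        apply continuousOn_finset_sum
        intro j _
        have h1 : ContinuousOn (fun p : ℝ × (Fin n → ℝ) => p.2 i) K0 :=
          ((continuous_apply i).comp continuous_snd).continuousOn
        have h2 : ContinuousOn (fun p : ℝ × (Fin n → ℝ) => Pm ε p.1 i j) K0 := by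
          apply (hPmc i j).comp continuous_fst.continuousOn
          intro p hp
          exact hp.1
        have h3 : ContinuousOn (fun p : ℝ × (Fin n → ℝ) => p.2 j) K0 :=
          ((continuous_apply j).comp continuous_snd).continuousOn
        exact h1.mul (h2.mul h3)
      apply hsumc.congr
      intro p _
      rw [hF]
      exact quadform_eq _ _
    set C : Set (ℝ × (Fin n → ℝ)) := K0 ∩ F ⁻¹' (Iic 0) with hC
    have hCc : IsCompact C :=
      hK0c.of_isClosed_subset
        (hFc.preimage_isClosed_of_isClosed (hK0c.isClosed) isClosed_Iic) inter_subset_left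
    set B : Set ℝ := Prod.fst '' C with hB
    have hBc : IsCompact B := hCc.image continuous_fst
    have hBne : B.Nonempty := ⟨τ₁, ⟨(τ₁, x₁), ⟨⟨hτ₁, hx₁⟩, hx₁le⟩, rfl⟩⟩
    set τ₀ : ℝ := sInf B with hτ₀
    have hτ₀B : τ₀ ∈ B := hBc.sInf_mem hBne
    obtain ⟨p, hpC, hp1⟩ := hτ₀B
    obtain ⟨⟨hpIcc, hpsph⟩, hple⟩ := hpC
    set x : Fin n → ℝ := p.2 with hx
    have hτ₀Icc : τ₀ ∈ Icc (0:ℝ) T := hp1 ▸ hpIcc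
    have hx1 : x ⬝ᵥ x = 1 := hpsph
    have hxle : x ⬝ᵥ Pm ε τ₀ *ᵥ x ≤ 0 := by
      have h : F p ≤ 0 := hple
      rw [← hp1]
      exact h
    -- τ₀ > 0
    have hτ₀pos : 0 < τ₀ := by
      rcases lt_or_eq_of_le hτ₀Icc.1 with h | h
      · exact h
      · exfalso
        rw [← h] at hxle
        rw [quadPm, hD0] at hxle
        simp [hx1] at hxle
        linarith
    -- positivity before τ₀
    have hBbdd : BddBelow B := hBc.bddBelow
    have hpos_before : ∀ τ ∈ Ico (0:ℝ) τ₀, ∀ y : Fin n → ℝ, y ⬝ᵥ y = 1 →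
        0 < y ⬝ᵥ Pm ε τ *ᵥ y := by
      intro τ hτ y hy
      by_contra hle
      push_neg at hle
      have hτIcc : τ ∈ Icc (0:ℝ) T := ⟨hτ.1, le_trans hτ.2.le hτ₀Icc.2⟩
      have : τ ∈ B := ⟨(τ, y), ⟨⟨hτIcc, hy⟩, hle⟩, rfl⟩
      exact absurd this (notMem_of_lt_csInf hτ.2 hBbdd)
    have hpsd_before : ∀ τ ∈ Ico (0:ℝ) τ₀, ∀ y : Fin n → ℝ,
        0 ≤ y ⬝ᵥ Pm ε τ *ᵥ y := fun τ hτ =>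
      psd_of_unit_pos (fun y hy => hpos_before τ hτ y hy)
    -- PSD at τ₀ by continuity from the left
    have hpsd_τ₀ : ∀ y : Fin n → ℝ, 0 ≤ y ⬝ᵥ Pm ε τ₀ *ᵥ y := by
      intro y
      have hgc : ContinuousOn (fun τ => y ⬝ᵥ Pm ε τ *ᵥ y) (Icc (0:ℝ) T) := by
        have hsumc : ContinuousOn (fun τ => ∑ i, ∑ j, y i * (Pm ε τ i j * y j)) (Icc (0:ℝ) T) := by
          apply continuousOn_finset_sum
          intro i _
          apply continuousOn_finset_sum
          intro j _
          exact (continuousOn_const.mul ((hPmc i j).mul continuousOn_const))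
        apply hsumc.congr
        intro τ _
        exact quadform_eq _ _
      have hneb : (𝓝[Ioo (0:ℝ) τ₀] τ₀).NeBot := by
        apply mem_closure_iff_nhdsWithin_neBot.1
        rw [closure_Ioo hτ₀pos.ne]
        exact ⟨hτ₀pos.le, le_rfl⟩
      have hsub : Ioo (0:ℝ) τ₀ ⊆ Icc (0:ℝ) T :=
        fun τ hτ => ⟨hτ.1.le, le_trans hτ.2.le hτ₀Icc.2⟩
      have htend : Tendsto (fun τ => y ⬝ᵥ Pm ε τ *ᵥ y) (𝓝[Ioo (0:ℝ) τ₀] τ₀)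
          (𝓝 (y ⬝ᵥ Pm ε τ₀ *ᵥ y)) :=
        (hgc τ₀ hτ₀Icc).tendsto.mono_left (nhdsWithin_mono _ hsub)
      refine ge_of_tendsto htend ?_
      filter_upwards [self_mem_nhdsWithin] with τ hτ
      exact hpsd_before τ ⟨hτ.1.le, hτ.2⟩ y
    have hq0 : x ⬝ᵥ Pm ε τ₀ *ᵥ x = 0 := le_antisymm hxle (hpsd_τ₀ x)
    -- Pm ε τ₀ is symmetric
    have hPmsym : (Pm ε τ₀).IsSymm := by
      show (Pm ε τ₀)ᵀ = Pm ε τ₀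
      rw [hPm]
      simp only [Matrix.transpose_add, Matrix.transpose_smul, Matrix.transpose_one]
      rw [hDsym τ₀ hτ₀Icc]
    have hPx : Pm ε τ₀ *ᵥ x = 0 := psd_mulVec_zero hPmsym hpsd_τ₀ hq0
    set r : ℝ := ε * Real.exp (c * τ₀) with hr
    have hrpos : 0 < r := mul_pos hε (Real.exp_pos _)
    have hDx : D τ₀ *ᵥ x = (-r) • x := by
      have hDeq : D τ₀ = Pm ε τ₀ - r • 1 := by rw [hPm, hr]; simp
      rw [hDeq, sub_mulVec, hPx, smul_mulVec, one_mulVec, zero_sub, neg_smul]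
    set w : Fin n → ℝ := E *ᵥ x with hw
    have hwb : w ⬝ᵥ w ≤ b := by
      have h1 : x ⬝ᵥ (Eᵀ * E) *ᵥ x = w ⬝ᵥ w := by
        rw [← mulVec_mulVec, dot_swap, hw]
      calc w ⬝ᵥ w = x ⬝ᵥ (Eᵀ * E) *ᵥ x := h1.symm
        _ ≤ |x ⬝ᵥ (Eᵀ * E) *ᵥ x| := le_abs_self _
        _ ≤ b * (x ⬝ᵥ x) := hBq x
        _ = b := by rw [hx1, mul_one]
    have ht1 : x ⬝ᵥ (Aᵀ * D τ₀) *ᵥ x = -(r * (x ⬝ᵥ A *ᵥ x)) := by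
      rw [← mulVec_mulVec, dot_swap, hDx, dotProduct_smul, smul_eq_mul, dotProduct_comm]
      ring
    have ht2 : x ⬝ᵥ (D τ₀ * A) *ᵥ x = -(r * (x ⬝ᵥ A *ᵥ x)) := by
      rw [← mulVec_mulVec, dot_symm_swap (hDsym τ₀ hτ₀Icc), hDx, smul_dotProduct, smul_eq_mul]
      ring
    have ht3 : x ⬝ᵥ (Eᵀ * D τ₀ * E) *ᵥ x = w ⬝ᵥ D τ₀ *ᵥ w := by
      rw [Matrix.mul_assoc, ← mulVec_mulVec, dot_swap]
      rw [← mulVec_mulVec, hw]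
    have ht3b : -(r * b) ≤ w ⬝ᵥ D τ₀ *ᵥ w := by
      have h := hpsd_τ₀ w
      rw [quadPm] at h
      have hww : 0 ≤ w ⬝ᵥ w := Finset.sum_nonneg fun i _ => mul_self_nonneg (w i)
      nlinarith [hrpos.le, hwb]
    set gf : ℝ → ℝ := fun τ => (∑ i, ∑ j, x i * (D τ i j * x j)) + ε * Real.exp (c * τ)
      with hgf
    have hgfeq : ∀ τ, gf τ = x ⬝ᵥ Pm ε τ *ᵥ x := by
      intro τ
      rw [hgf]
      simp only
      rw [quadPm, ← quadform_eq, hx1, mul_one]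
    set dtot : ℝ := (∑ i, ∑ j, x i * (dD τ₀ i j * x j)) + ε * (Real.exp (c * τ₀) * c)
      with hdtot
    have hgder : HasDerivAt gf dtot τ₀ := by
      apply HasDerivAt.add
      · exact HasDerivAt.fun_sum fun i _ => HasDerivAt.fun_sum fun j _ =>
          ((hDder τ₀ hτ₀Icc i j).mul_const (x j)).const_mul (x i)
      · have h1 : HasDerivAt (fun τ : ℝ => c * τ) c τ₀ := by
          simpa using (hasDerivAt_id τ₀).const_mul c
        have h2 := h1.exp
        have h3 := h2.const_mul ε
        exact h3
    have hgmin : ∀ τ ∈ Ioo 0 τ₀, gf τ₀ ≤ gf τ := by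
      intro τ hτ
      rw [hgfeq, hgfeq, hq0]
      exact hpsd_before τ ⟨hτ.1.le, hτ.2⟩ x
    have hdle : dtot ≤ 0 := deriv_nonpos_of_left_min hgder hτ₀pos hgmin
    have hquad_dD : (∑ i, ∑ j, x i * (dD τ₀ i j * x j)) = x ⬝ᵥ dD τ₀ *ᵥ x :=
      (quadform_eq _ _).symm
    have hsum : x ⬝ᵥ (Aᵀ * D τ₀ + D τ₀ * A + Eᵀ * D τ₀ * E) *ᵥ x
        = w ⬝ᵥ D τ₀ *ᵥ w - 2 * (r * (x ⬝ᵥ A *ᵥ x)) := by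
      rw [add_mulVec, add_mulVec, dotProduct_add, dotProduct_add, ht1, ht2, ht3]
      ring
    have hAx : |x ⬝ᵥ A *ᵥ x| ≤ a := by
      have h := hAq x
      rw [hx1, mul_one] at h
      exact h
    have hlow : r ≤ dtot := by
      have h1 := LMIkey τ₀ hτ₀Icc x
      rw [hsum] at h1
      have habs := abs_le.1 hAx
      have hrc : ε * (Real.exp (c * τ₀) * c) = r * c := by rw [hr]; ring
      rw [hdtot, hquad_dD, hrc, hc]
      nlinarith [hrpos.le, habs.1, habs.2, ht3b]
    linarith
  -- conclusion from the claim
  intro τ hτ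
  refine Matrix.PosSemidef.of_dotProduct_mulVec_nonneg ?_ ?_
  · apply Matrix.IsHermitian.ext
    intro i j
    rw [star_trivial]
    have h := congrFun (congrFun (hDsym τ hτ) i) j
    rw [Matrix.transpose_apply] at h
    exact h
  · intro y
    rw [star_trivial]
    by_contra hneg
    push_neg at hneg
    have hy0 : y ≠ 0 := by
      intro h
      rw [h] at hneg
      simp at hneg
    have hyy : 0 < y ⬝ᵥ y := by
      have hnn : 0 ≤ y ⬝ᵥ y := Finset.sum_nonneg fun i _ => mul_self_nonneg (y i)
      rcases lt_or_eq_of_le hnn with h | h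
      · exact h
      · exact absurd (dotProduct_self_eq_zero.1 h.symm) hy0
    set v : ℝ := y ⬝ᵥ (S τ - Q τ) *ᵥ y with hv
    have hvneg : v < 0 := hneg
    set K : ℝ := Real.exp (c * τ) * (y ⬝ᵥ y) with hK
    have hKpos : 0 < K := mul_pos (Real.exp_pos _) hyy
    set ε : ℝ := -v / (2 * K) with hε
    have hεpos : 0 < ε := by
      apply div_pos (by linarith) (by linarith)
    have hge := psd_of_unit_pos (claim ε hεpos τ hτ) y
    rw [quadPm] at hge
    have heK : ε * Real.exp (c * τ) * (y ⬝ᵥ y) = -v / 2 := by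
      rw [hε, hK]
      field_simp
    have hDv : y ⬝ᵥ D τ *ᵥ y = v := rfl
    rw [hDv, heK] at hge
    linarith
end

section
/- Suppose S : [0, T̄] → Sym(n,ℝ) is differentiable, S(0) ≻ 0, satisfies -S'(τ) + AᵀS(τ) + S(τ)A ≼ 0 on [0,T̄] (deterministic case E_c = 0) and JᵀS(T̄)J - S(0) + εI ≼ 0 for some ε > 0. Then the matrix e^{AT̄}J satisfies Jᵀ(e^{AT̄})ᵀ S(0) e^{AT̄} J ≼ S(0) - εI; in particular the spectral radius of e^{AT̄}J is less than 1. -/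
open Matrix Set
open scoped ComplexOrder

section Helpers

open NormedSpace

/-- Entrywise derivative of the matrix exponential `τ ↦ exp (τ • A)`. -/
lemma exp_entry_hasDerivAt {n : ℕ} (A : Matrix (Fin n) (Fin n) ℝ) (t : ℝ) (i j : Fin n) :
    HasDerivAt (fun s : ℝ => exp (s • A) i j) ((A * exp (t • A)) i j) t := by
  letI : SeminormedRing (Matrix (Fin n) (Fin n) ℝ) := Matrix.linftyOpSemiNormedRing
  letI : NormedRing (Matrix (Fin n) (Fin n) ℝ) := Matrix.linftyOpNormedRing
  letI : NormedAlgebra ℝ (Matrix (Fin n) (Fin n) ℝ) := Matrix.linftyOpNormedAlgebra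
  letI : CompleteSpace (Matrix (Fin n) (Fin n) ℝ) := FiniteDimensional.complete ℝ _
  have h := hasDerivAt_exp_smul_const' (𝕂 := ℝ) A t
  exact (LinearMap.toContinuousLinearMap
    (Matrix.entryLinearMap ℝ ℝ (m := Fin n) i j)).hasFDerivAt.comp_hasDerivAt t h

/-- Comparison lemma: the quadratic form of `S` does not decrease along the backward flow. -/
lemma comparison {n : ℕ} (A : Matrix (Fin n) (Fin n) ℝ) (T : ℝ) (hT : 0 < T)
    (S dS : ℝ → Matrix (Fin n) (Fin n) ℝ)
    (hSder : ∀ τ ∈ Icc (0 : ℝ) T, ∀ i j, HasDerivAt (fun s => S s i j) (dS τ i j) τ)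
    (hDLMI : ∀ τ ∈ Icc (0 : ℝ) T, (dS τ - (Aᵀ * S τ + S τ * A)).PosSemidef)
    (y : Fin n → ℝ) :
    y ⬝ᵥ (S 0 *ᵥ y) ≤ (exp (T • (-A)) *ᵥ y) ⬝ᵥ (S T *ᵥ (exp (T • (-A)) *ᵥ y)) := by
  classical
  set B := -A with hB
  set u : ℝ → Fin n → ℝ := fun τ => exp (τ • B) *ᵥ y with hu_def
  have hu : ∀ (τ : ℝ) (k : Fin n),
      HasDerivAt (fun s => u s k) (((B * exp (τ • B)) *ᵥ y) k) τ := by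
    intro τ k
    have : ∀ s, u s k = ∑ j, exp (s • B) k j * y j := by
      intro s; simp [hu_def, mulVec, dotProduct]
    simp only [this, mulVec, dotProduct]
    exact HasDerivAt.fun_sum fun j _ => (exp_entry_hasDerivAt B τ k j).mul_const (y j)
  set φ : ℝ → ℝ := fun τ => u τ ⬝ᵥ (S τ *ᵥ u τ) with hφ_def
  have hBE : ∀ τ : ℝ, (B * exp (τ • B)) *ᵥ y = -(A *ᵥ u τ) := by
    intro τ
    rw [← mulVec_mulVec, hB, neg_mulVec]
  have hφ' : ∀ τ ∈ Icc (0:ℝ) T, HasDerivAt φ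
      (u τ ⬝ᵥ (dS τ *ᵥ u τ) - (A *ᵥ u τ) ⬝ᵥ (S τ *ᵥ u τ) - u τ ⬝ᵥ (S τ *ᵥ (A *ᵥ u τ))) τ := by
    intro τ hτ
    have hsum : HasDerivAt (fun s => ∑ k, ∑ l, (u s k * S s k l) * u s l)
        (∑ k, ∑ l, (((((B * exp (τ • B)) *ᵥ y) k) * S τ k l + u τ k * dS τ k l) * u τ l
          + (u τ k * S τ k l) * (((B * exp (τ • B)) *ᵥ y) l))) τ := by
      refine HasDerivAt.fun_sum fun k _ => HasDerivAt.fun_sum fun l _ => ?_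
      exact ((hu τ k).mul (hSder τ hτ k l)).mul (hu τ l)
    have heq1 : φ = fun s => ∑ k, ∑ l, (u s k * S s k l) * u s l := by
      funext s
      simp [hφ_def, dotProduct, mulVec, Finset.mul_sum, mul_assoc]
    have heq2 : (∑ k, ∑ l, (((((B * exp (τ • B)) *ᵥ y) k) * S τ k l + u τ k * dS τ k l) * u τ l
          + (u τ k * S τ k l) * (((B * exp (τ • B)) *ᵥ y) l)))
        = u τ ⬝ᵥ (dS τ *ᵥ u τ) - (A *ᵥ u τ) ⬝ᵥ (S τ *ᵥ u τ) - u τ ⬝ᵥ (S τ *ᵥ (A *ᵥ u τ)) := by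
      simp only [hBE τ]
      simp only [dotProduct, mulVec, Finset.mul_sum, Pi.neg_apply,
        ← Finset.sum_sub_distrib, ← Finset.sum_add_distrib]
      refine Finset.sum_congr rfl fun k _ => ?_
      refine Finset.sum_congr rfl fun l _ => ?_
      simp only [← Finset.mul_sum]
      ring
    rw [heq1, ← heq2]
    exact hsum
  have hD : ∀ τ ∈ Icc (0:ℝ) T,
      0 ≤ u τ ⬝ᵥ (dS τ *ᵥ u τ) - (A *ᵥ u τ) ⬝ᵥ (S τ *ᵥ u τ) - u τ ⬝ᵥ (S τ *ᵥ (A *ᵥ u τ)) := by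
    intro τ hτ
    have h := (hDLMI τ hτ).dotProduct_mulVec_nonneg (u τ)
    rw [star_trivial] at h
    have hAt : u τ ⬝ᵥ (Aᵀ *ᵥ (S τ *ᵥ u τ)) = (A *ᵥ u τ) ⬝ᵥ (S τ *ᵥ u τ) := by
      rw [mulVec_transpose, dotProduct_comm, ← dotProduct_mulVec, dotProduct_comm]
    calc (0:ℝ) ≤ u τ ⬝ᵥ ((dS τ - (Aᵀ * S τ + S τ * A)) *ᵥ u τ) := h
    _ = _ := by
      rw [sub_mulVec, add_mulVec, dotProduct_sub, dotProduct_add,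
        ← mulVec_mulVec, ← mulVec_mulVec, hAt]
      ring
  have hmono : MonotoneOn φ (Icc (0:ℝ) T) := by
    apply monotoneOn_of_deriv_nonneg (convex_Icc 0 T)
    · intro τ hτ
      exact ((hφ' τ hτ).continuousAt).continuousWithinAt
    · intro τ hτ
      rw [interior_Icc] at hτ
      exact ((hφ' τ (Ioo_subset_Icc_self hτ)).differentiableAt).differentiableWithinAt
    · intro τ hτ
      rw [interior_Icc] at hτ
      rw [(hφ' τ (Ioo_subset_Icc_self hτ)).deriv]
      exact hD τ (Ioo_subset_Icc_self hτ)
  have h01 := hmono (left_mem_Icc.2 hT.le) (right_mem_Icc.2 hT.le) hT.le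
  simpa only [hφ_def, hu_def, hB, zero_smul, NormedSpace.exp_zero, one_mulVec] using h01

noncomputable def reV {n : ℕ} (x : Fin n → ℂ) : Fin n → ℝ := fun i => (x i).re
noncomputable def imV {n : ℕ} (x : Fin n → ℂ) : Fin n → ℝ := fun i => (x i).im

lemma symm_dot_comm {n : ℕ} (P : Matrix (Fin n) (Fin n) ℝ) (hP : P.IsSymm)
    (a b : Fin n → ℝ) : a ⬝ᵥ (P *ᵥ b) = b ⬝ᵥ (P *ᵥ a) := by
  rw [dotProduct_mulVec, ← Matrix.mulVec_transpose, hP.eq, dotProduct_comm]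

lemma quad_map_eq {n : ℕ} (P : Matrix (Fin n) (Fin n) ℝ) (hP : P.IsSymm) (x : Fin n → ℂ) :
    star x ⬝ᵥ ((P.map ((↑) : ℝ → ℂ)) *ᵥ x) =
      ((reV x ⬝ᵥ (P *ᵥ reV x) + imV x ⬝ᵥ (P *ᵥ imV x) : ℝ) : ℂ) := by
  classical
  have hx : x = (fun i => ((reV x i : ℝ) : ℂ)) + Complex.I • (fun i => ((imV x i : ℝ) : ℂ)) := by
    funext i
    simp [reV, imV, Complex.ext_iff]
  set a' : Fin n → ℂ := fun i => ((reV x i : ℝ) : ℂ) with ha'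
  set b' : Fin n → ℂ := fun i => ((imV x i : ℝ) : ℂ) with hb'
  have hstar : star x = a' - Complex.I • b' := by
    funext i
    simp [ha', hb', reV, imV, Complex.ext_iff]
  have hmap : ∀ u : Fin n → ℝ, ∀ v : Fin n → ℝ,
      (fun i => ((u i : ℝ) : ℂ)) ⬝ᵥ ((P.map ((↑) : ℝ → ℂ)) *ᵥ fun i => ((v i : ℝ) : ℂ)) =
        ((u ⬝ᵥ (P *ᵥ v) : ℝ) : ℂ) := by
    intro u v
    simp [dotProduct, mulVec, Finset.mul_sum]
  conv_lhs => rw [hstar, hx]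
  rw [mulVec_add, mulVec_smul, dotProduct_add, sub_dotProduct, sub_dotProduct,
    smul_dotProduct, smul_dotProduct, dotProduct_smul, dotProduct_smul]
  rw [hmap, hmap, hmap, hmap]
  have hsym : (imV x ⬝ᵥ (P *ᵥ reV x)) = (reV x ⬝ᵥ (P *ᵥ imV x)) := symm_dot_comm P hP _ _
  rw [hsym]
  simp only [smul_eq_mul]
  push_cast
  ring_nf
  rw [Complex.I_sq]
  ring

lemma isSymm_of_posSemidef {n : ℕ} {P : Matrix (Fin n) (Fin n) ℝ} (h : P.PosSemidef) :
    P.IsSymm := by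
  have h1 := h.1
  ext i j
  have := congrFun (congrFun h1 i) j
  simpa [Matrix.conjTranspose_apply, Matrix.transpose_apply] using this

lemma posSemidef_mapC {n : ℕ} {P : Matrix (Fin n) (Fin n) ℝ} (h : P.PosSemidef) :
    (P.map ((↑) : ℝ → ℂ)).PosSemidef := by
  have hsym : P.IsSymm := isSymm_of_posSemidef h
  refine Matrix.PosSemidef.of_dotProduct_mulVec_nonneg ?_ ?_
  · ext i j
    have : P j i = P i j := by
      have := congrFun (congrFun hsym.eq i) j
      simpa [Matrix.transpose_apply] using this
    simp [Matrix.conjTranspose_apply, Matrix.map_apply, this]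
  · intro x
    rw [quad_map_eq P hsym x]
    rw [Complex.zero_le_real]
    have h1 := h.dotProduct_mulVec_nonneg (reV x)
    have h2 := h.dotProduct_mulVec_nonneg (imV x)
    rw [star_trivial] at h1 h2
    linarith

lemma eigvec_of_mem_spectrum {n : ℕ} (M : Matrix (Fin n) (Fin n) ℂ) (μ : ℂ)
    (h : μ ∈ spectrum ℂ M) : ∃ v : Fin n → ℂ, v ≠ 0 ∧ M *ᵥ v = μ • v := by
  rw [← AlgEquiv.spectrum_eq (Matrix.toLinAlgEquiv (Pi.basisFun ℂ (Fin n)))] at h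
  rw [← Module.End.hasEigenvalue_iff_mem_spectrum] at h
  obtain ⟨v, hv⟩ := h.exists_hasEigenvector
  refine ⟨v, hv.right, ?_⟩
  have := hv.apply_eq_smul
  rw [Matrix.toLinAlgEquiv_apply] at this
  rw [← this]
  ext i
  simp [Pi.basisFun_apply, Pi.basisFun_repr, Finset.sum_apply, Pi.single_apply, mulVec,
    dotProduct, mul_comm]

end Helpers

/-- Deterministic specialization of Theorem 1: the clock-dependent LMI certificate yields
the strict discrete Lyapunov inequality `Mᵀ S(0) M ≼ S(0) - εI` for the monodromy matrix
`M = e^{AT̄} J`, hence Schur stability of `M`. -/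
theorem stmt18 (n : ℕ) (A J : Matrix (Fin n) (Fin n) ℝ) (T ε : ℝ)
    (hT : 0 < T) (hε : 0 < ε)
    (S dS : ℝ → Matrix (Fin n) (Fin n) ℝ)
    (hS0 : (S 0).PosDef)
    (hSsym : ∀ τ ∈ Icc (0 : ℝ) T, (S τ).IsSymm)
    (hSder : ∀ τ ∈ Icc (0 : ℝ) T, ∀ i j, HasDerivAt (fun s => S s i j) (dS τ i j) τ)
    (hDLMI : ∀ τ ∈ Icc (0 : ℝ) T, (dS τ - (Aᵀ * S τ + S τ * A)).PosSemidef)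
    (hjump : (S 0 - (Jᵀ * S T * J + ε • (1 : Matrix (Fin n) (Fin n) ℝ))).PosSemidef) :
    (S 0 - ε • (1 : Matrix (Fin n) (Fin n) ℝ) -
      (NormedSpace.exp (T • A) * J)ᵀ * S 0 * (NormedSpace.exp (T • A) * J)).PosSemidef ∧
    (∀ μ ∈ spectrum ℂ ((NormedSpace.exp (T • A) * J).map (fun x : ℝ => (x : ℂ))),
      ‖μ‖ < 1) := by
  classical
  set P := NormedSpace.exp (T • A) with hP
  -- inverse relation
  have hinv : NormedSpace.exp (T • (-A)) * P = 1 := by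
    rw [hP, smul_neg,
      ← Matrix.exp_add_of_commute (-(T • A)) (T • A) (Commute.neg_left rfl)]
    simp [NormedSpace.exp_zero]
  -- the flow comparison inequality in matrix form
  have hQ : (S T - Pᵀ * S 0 * P).PosSemidef := by
    refine Matrix.PosSemidef.of_dotProduct_mulVec_nonneg ?_ ?_
    · have hST : (S T)ᵀ = S T := (hSsym T (right_mem_Icc.2 hT.le)).eq
      have hS0s : (S 0)ᵀ = S 0 := (hSsym 0 (left_mem_Icc.2 hT.le)).eq
      show (S T - Pᵀ * S 0 * P)ᴴ = _
      have : ∀ M : Matrix (Fin n) (Fin n) ℝ, Mᴴ = Mᵀ := fun M => by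
        ext i j; simp [Matrix.conjTranspose_apply, Matrix.transpose_apply]
      rw [this, transpose_sub, hST, transpose_mul, transpose_mul, transpose_transpose,
        hS0s, mul_assoc]
    · intro z
      rw [star_trivial]
      have hcomp := comparison A T hT S dS hSder hDLMI (P *ᵥ z)
      have hz : NormedSpace.exp (T • (-A)) *ᵥ (P *ᵥ z) = z := by
        rw [mulVec_mulVec, hinv, one_mulVec]
      rw [hz] at hcomp
      have hquad : z ⬝ᵥ ((Pᵀ * S 0 * P) *ᵥ z) = (P *ᵥ z) ⬝ᵥ (S 0 *ᵥ (P *ᵥ z)) := by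
        rw [← mulVec_mulVec, ← mulVec_mulVec, mulVec_transpose, dotProduct_comm,
          ← dotProduct_mulVec, dotProduct_comm]
      rw [sub_mulVec, dotProduct_sub, hquad]
      linarith
  -- first conclusion
  have hkey : S 0 - ε • (1 : Matrix (Fin n) (Fin n) ℝ) - (P * J)ᵀ * S 0 * (P * J)
      = (S 0 - (Jᵀ * S T * J + ε • (1 : Matrix (Fin n) (Fin n) ℝ)))
        + Jᵀ * (S T - Pᵀ * S 0 * P) * J := by
    rw [transpose_mul]
    noncomm_ring
  have hconj : (Jᵀ * (S T - Pᵀ * S 0 * P) * J).PosSemidef := by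
    have h := hQ.conjTranspose_mul_mul_same J
    have : Jᴴ = Jᵀ := by ext i j; simp [Matrix.conjTranspose_apply, Matrix.transpose_apply]
    rwa [this] at h
  have hfirst : (S 0 - ε • (1 : Matrix (Fin n) (Fin n) ℝ) -
      (P * J)ᵀ * S 0 * (P * J)).PosSemidef := by
    rw [hkey]; exact hjump.add hconj
  refine ⟨hfirst, ?_⟩
  -- second conclusion: Schur stability
  intro μ hμ
  obtain ⟨v, hv0, hv⟩ := eigvec_of_mem_spectrum _ μ hμ
  set c : ℝ → ℂ := fun x : ℝ => (x : ℂ) with hc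
  set M := P * J with hM
  set Mc := M.map c with hMc
  -- the mapped Lyapunov matrix inequality
  have hfirstC := posSemidef_mapC hfirst
  have hS0sym : (S 0).IsSymm := hSsym 0 (left_mem_Icc.2 hT.le)
  -- quadratic forms
  set q : ℝ := reV v ⬝ᵥ (S 0 *ᵥ reV v) + imV v ⬝ᵥ (S 0 *ᵥ imV v) with hq
  have hq_eq : star v ⬝ᵥ (((S 0).map c) *ᵥ v) = (q : ℂ) := quad_map_eq (S 0) hS0sym v
  have hqpos : 0 < q := by
    have hne : reV v ≠ 0 ∨ imV v ≠ 0 := by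
      by_contra hcon
      push_neg at hcon
      apply hv0
      funext i
      have h1 := congrFun hcon.1 i
      have h2 := congrFun hcon.2 i
      simp only [reV, imV, Pi.zero_apply] at h1 h2
      exact Complex.ext h1 h2
    rcases hne with hne | hne
    · have h1 := hS0.dotProduct_mulVec_pos hne
      rw [star_trivial] at h1
      have h2 := hS0.posSemidef.dotProduct_mulVec_nonneg (imV v)
      rw [star_trivial] at h2
      linarith
    · have h1 := hS0.dotProduct_mulVec_pos hne
      rw [star_trivial] at h1
      have h2 := hS0.posSemidef.dotProduct_mulVec_nonneg (reV v)
      rw [star_trivial] at h2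
      linarith
  -- norm of v
  set r : ℝ := ∑ i, Complex.normSq (v i) with hr
  have hr_eq : star v ⬝ᵥ v = (r : ℂ) := by
    simp only [hr, dotProduct, Pi.star_apply]
    push_cast
    refine Finset.sum_congr rfl fun i _ => ?_
    rw [Complex.star_def, Complex.normSq_eq_conj_mul_self]
  have hrpos : 0 < r := by
    obtain ⟨i, hi⟩ := Function.ne_iff.1 hv0
    have : 0 < Complex.normSq (v i) := Complex.normSq_pos.2 hi
    exact Finset.sum_pos' (fun j _ => Complex.normSq_nonneg _) ⟨i, Finset.mem_univ i, this⟩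
  -- expand the mapped quadratic inequality at v
  have hFmul : ∀ X Y : Matrix (Fin n) (Fin n) ℝ,
      (X * Y).map c = X.map c * Y.map c := fun X Y =>
    Matrix.map_mul (f := Complex.ofRealHom)
  have hFsub : ∀ X Y : Matrix (Fin n) (Fin n) ℝ,
      (X - Y).map c = X.map c - Y.map c := fun X Y => by
    ext i j
    simp [Matrix.map_apply, hc]
  have hMcH : Mcᴴ = (Mᵀ).map c := by
    ext i j
    simp [hMc, Matrix.conjTranspose_apply, Matrix.map_apply, Matrix.transpose_apply, hc]
  have hsm : (ε • (1 : Matrix (Fin n) (Fin n) ℝ)).map c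
      = (ε : ℂ) • (1 : Matrix (Fin n) (Fin n) ℂ) := by
    ext i j
    by_cases h : i = j <;> simp [Matrix.map_apply, Matrix.one_apply, h, hc]
  have hmapeq : (S 0 - ε • (1 : Matrix (Fin n) (Fin n) ℝ) - Mᵀ * S 0 * M).map c
      = (S 0).map c - (ε : ℂ) • (1 : Matrix (Fin n) (Fin n) ℂ)
        - Mcᴴ * ((S 0).map c) * Mc := by
    rw [hFsub, hFsub, hsm, hFmul, hFmul, hMcH]
  have hineq := hfirstC.dotProduct_mulVec_nonneg v
  rw [hmapeq] at hineq
  have hMv : Mc *ᵥ v = μ • v := hv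
  have hZ : star v ⬝ᵥ ((Mcᴴ * ((S 0).map c) * Mc) *ᵥ v)
      = (Complex.normSq μ : ℂ) * (q : ℂ) := by
    have e2 : star v ⬝ᵥ ((Mcᴴ * ((S 0).map c) * Mc) *ᵥ v)
        = star (Mc *ᵥ v) ⬝ᵥ (((S 0).map c) *ᵥ (Mc *ᵥ v)) := by
      simp only [star_mulVec, dotProduct_mulVec, vecMul_vecMul, Matrix.mul_assoc]
    rw [e2, hMv, star_smul, smul_dotProduct, mulVec_smul, dotProduct_smul, hq_eq]
    simp only [smul_eq_mul, Complex.star_def, Complex.normSq_eq_conj_mul_self]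
    ring
  have hmid : star v ⬝ᵥ (((ε : ℂ) • (1 : Matrix (Fin n) (Fin n) ℂ)) *ᵥ v)
      = (ε : ℂ) * (r : ℂ) := by
    rw [smul_mulVec, one_mulVec, dotProduct_smul, hr_eq, smul_eq_mul]
  rw [sub_mulVec, sub_mulVec, dotProduct_sub, dotProduct_sub, hq_eq, hmid, hZ] at hineq
  have hreal : (0:ℝ) ≤ q - ε * r - Complex.normSq μ * q := by
    have : ((q - ε * r - Complex.normSq μ * q : ℝ) : ℂ)
        = (q : ℂ) - (ε : ℂ) * (r : ℂ) - (Complex.normSq μ : ℂ) * (q : ℂ) := by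
      push_cast; ring
    rw [← Complex.zero_le_real, this]
    exact hineq
  have hns : Complex.normSq μ < 1 := by nlinarith
  have habs : ‖μ‖ ^ 2 < 1 := by rw [Complex.sq_norm]; exact hns
  nlinarith [norm_nonneg μ]
end
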